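/- Let G be an index coding instance on n ≥ 1 messages and t, k ≥ 1 integers. Under the natural bijection identifying ({0,1}^{tk})^n with (({0,1}^t)^n)^k (splitting the tk-bit string of each message into k consecutive blocks of t bits), the clique number of the confusion graph Γ_{tk}(G) is at most the independence number of the k-fold strong product of the complement of Γ_t(G): ω(Γ_{tk}(G)) ≤ α( (Γ_t(G))ᶜ ^{⊠k} ). -/

import Mathlib

namespace IC

/-- Two message tuples (with `x_i ∈ {0,…,q−1}^{t_i}`) are confusable at
position `l` of node `j` for the directed graph with edge relation `E`. -/
def ConfusableAt {n q : ℕ} (E : Fin n → Fin n → Prop) (t : Fin n → ℕ)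
    (j : Fin n) (l : Fin (t j))
    (x z : ∀ i : Fin n, Fin (t i) → Fin q) : Prop :=
  x j l ≠ z j l ∧ ∀ i : Fin n, E i j → x i = z i

/-- The component confusion graph `Γ_t^{(jl)}(G)`. -/
def componentConfusionGraph {n : ℕ} (q : ℕ) (E : Fin n → Fin n → Prop) (t : Fin n → ℕ)
    (j : Fin n) (l : Fin (t j)) :
    SimpleGraph (∀ i : Fin n, Fin (t i) → Fin q) where
  Adj x z := ConfusableAt E t j l x z
  symm := ⟨fun _ _ ⟨h1, h2⟩ => ⟨h1.symm, fun i hi => (h2 i hi).symm⟩⟩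
  loopless := ⟨fun _ ⟨h1, _⟩ => h1 rfl⟩

/-- The confusion graph `Γ_t(G)`. -/
def confusionGraph {n : ℕ} (q : ℕ) (E : Fin n → Fin n → Prop) (t : Fin n → ℕ) :
    SimpleGraph (∀ i : Fin n, Fin (t i) → Fin q) where
  Adj x z := ∃ (j : Fin n) (l : Fin (t j)), ConfusableAt E t j l x z
  symm := ⟨fun _ _ ⟨j, l, h1, h2⟩ => ⟨j, l, h1.symm, fun i hi => (h2 i hi).symm⟩⟩
  loopless := ⟨fun _ ⟨_, _, h1, _⟩ => h1 rfl⟩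

end IC
namespace IC

/-- The `k`-fold strong product of an undirected graph with itself. -/
def strongPow {V : Type*} (U : SimpleGraph V) (k : ℕ) : SimpleGraph (Fin k → V) where
  Adj f g := f ≠ g ∧ ∀ i, f i = g i ∨ U.Adj (f i) (g i)
  symm := ⟨fun _ _ ⟨h1, h2⟩ => ⟨h1.symm, fun i => (h2 i).imp Eq.symm U.adj_symm⟩⟩
  loopless := ⟨fun _ ⟨h1, _⟩ => h1 rfl⟩

/-- The independence number `α`. -/
noncomputable def indepNum {V : Type*} (U : SimpleGraph V) : ℕ :=
  sSup {k | ∃ s : Finset V, s.card = k ∧ ∀ a ∈ s, ∀ b ∈ s, a ≠ b → ¬ U.Adj a b}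

/-- The Shannon capacity `Θ(U) = sup_{k ≥ 1} α(U^{⊠k})^{1/k}`. -/
noncomputable def shannonCapacity {V : Type*} (U : SimpleGraph V) : ℝ :=
  ⨆ k : ℕ, (indepNum (strongPow U (k + 1)) : ℝ) ^ ((1 : ℝ) / (k + 1))

end IC

/-- For integers `t, k ≥ 1`, the clique number of the
confusion graph `Γ_{tk}(G)` is at most the independence number of the `k`-fold
strong product of the complement of `Γ_t(G)`. -/
theorem cliqueNum_confusionGraph_le_indepNum_strongPow
    (n : ℕ) (hn : 1 ≤ n)
    (E : Fin n → Fin n → Prop) (hE : ∀ i, ¬ E i i)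
    (t k : ℕ) (ht : 1 ≤ t) (hk : 1 ≤ k) :
    (IC.confusionGraph 2 E (fun _ : Fin n => t * k)).cliqueNum ≤
      IC.indepNum (IC.strongPow ((IC.confusionGraph 2 E (fun _ : Fin n => t))ᶜ) k) := by
  classical
  have htpos : 0 < t := ht
  set Γtk := IC.confusionGraph 2 E (fun _ : Fin n => t * k) with hΓtk
  set Γt := IC.confusionGraph 2 E (fun _ : Fin n => t) with hΓt
  set H := IC.strongPow (Γtᶜ) k with hH
  let φ : (∀ _ : Fin n, Fin (t * k) → Fin 2) → (Fin k → (∀ _ : Fin n, Fin t → Fin 2)) :=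
    fun x m i r => x i ⟨m.1 * t + r.1, by
      calc m.1 * t + r.1 < m.1 * t + t := by omega
        _ = (m.1 + 1) * t := by ring
        _ ≤ k * t := Nat.mul_le_mul_right t m.2
        _ = t * k := Nat.mul_comm _ _⟩
  have key : ∀ x z, Γtk.Adj x z →
      ∃ m : Fin k, φ x m ≠ φ z m ∧ Γt.Adj (φ x m) (φ z m) := by
    rintro x z ⟨j, l, hne, hside⟩
    have hl : l.1 < t * k := l.2
    have hidx : (l.1 / t) * t + l.1 % t = l.1 := by
      rw [Nat.mul_comm]; exact Nat.div_add_mod _ _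
    have hm : l.1 / t < k := Nat.div_lt_of_lt_mul hl
    set m : Fin k := ⟨l.1 / t, hm⟩ with hmdef
    set r : Fin t := ⟨l.1 % t, Nat.mod_lt _ htpos⟩ with hrdef
    have heval : ∀ w : ∀ _ : Fin n, Fin (t * k) → Fin 2, φ w m j r = w j l := by
      intro w
      show w j ⟨(l.1 / t) * t + l.1 % t, _⟩ = w j l
      congr 1
      exact Fin.ext hidx
    have hner : φ x m j r ≠ φ z m j r := by
      rw [heval x, heval z]; exact hne
    refine ⟨m, ?_, j, r, hner, ?_⟩
    · intro hcon
      exact hner (congrFun (congrFun hcon j) r)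
    · intro i hi
      funext r'
      simp only [φ]
      rw [hside i hi]
  refine csSup_le_csSup ?_ ⟨0, ∅, SimpleGraph.isNClique_empty.mpr rfl⟩ ?_
  · exact ⟨Fintype.card (Fin k → ∀ _ : Fin n, Fin t → Fin 2),
      fun c ⟨s, hs, _⟩ => hs ▸ Finset.card_le_univ s⟩
  · rintro c ⟨s, hclique, hcard⟩
    refine ⟨s.image (fun x => φ x), ?_, ?_⟩
    · rw [Finset.card_image_of_injOn, hcard]
      intro x hx z hz hxz
      by_contra hne
      obtain ⟨m, hm, _⟩ := key x z (hclique hx hz hne)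
      exact hm (congrFun hxz m)
    · rintro a ha b hb hab hadj
      obtain ⟨x, hx, rfl⟩ := Finset.mem_image.mp ha
      obtain ⟨z, hz, rfl⟩ := Finset.mem_image.mp hb
      have hxz : x ≠ z := by rintro rfl; exact hab rfl
      obtain ⟨m, hm, hadjm⟩ := key x z (hclique hx hz hxz)
      rcases hadj.2 m with h | h
      · exact hm h
      · exact h.2 hadjm
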